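/- Let S be an m × m real matrix that is entrywise nonnegative, i.e., S i j ≥ 0 for all indices i, j. Then trace(S^k) = 0 for every integer k ≥ 1 if and only if the support digraph of S is acyclic, i.e., there is no index i with Relation.TransGen (fun a b => S a b ≠ 0) i i. -/

import Mathlib

lemma pow_entry_nonneg (m : ℕ) (S : Matrix (Fin m) (Fin m) ℝ)
    (hS : ∀ i j, 0 ≤ S i j) : ∀ k i j, 0 ≤ (S ^ k) i j := by
  intro k
  induction k with
  | zero =>
      intro i j
      simp [Matrix.one_apply]
      split <;> norm_num
  | succ n ih =>
      intro i j
      rw [pow_succ, Matrix.mul_apply]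
      exact Finset.sum_nonneg fun x _ => mul_nonneg (ih i x) (hS x j)

lemma transGen_pos (m : ℕ) (S : Matrix (Fin m) (Fin m) ℝ)
    (hS : ∀ i j, 0 ≤ S i j) {i j : Fin m}
    (h : Relation.TransGen (fun a b => S a b ≠ 0) i j) :
    ∃ k, 1 ≤ k ∧ 0 < (S ^ k) i j := by
  induction h with
  | single hb =>
      exact ⟨1, le_refl 1, by rw [pow_one]; exact lt_of_le_of_ne (hS _ _) (Ne.symm hb)⟩
  | tail _ hbc ih =>
      obtain ⟨k, hk, hpos⟩ := ih
      refine ⟨k + 1, le_add_self, ?_⟩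
      rw [pow_succ, Matrix.mul_apply]
      refine Finset.sum_pos' (fun x _ => mul_nonneg (pow_entry_nonneg m S hS k i x) (hS x _)) ?_
      exact ⟨_, Finset.mem_univ _,
        mul_pos hpos (lt_of_le_of_ne (hS _ _) (Ne.symm hbc))⟩

lemma pow_ne_zero_transGen (m : ℕ) (S : Matrix (Fin m) (Fin m) ℝ) :
    ∀ k i j, (S ^ (k + 1)) i j ≠ 0 → Relation.TransGen (fun a b => S a b ≠ 0) i j := by
  intro k
  induction k with
  | zero =>
      intro i j h
      rw [pow_one] at h
      exact Relation.TransGen.single h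
  | succ n ih =>
      intro i j h
      rw [pow_succ, Matrix.mul_apply] at h
      obtain ⟨x, _, hx⟩ := Finset.exists_ne_zero_of_sum_ne_zero h
      have h1 : (S ^ (n + 1)) i x ≠ 0 := left_ne_zero_of_mul hx
      have h2 : S x j ≠ 0 := right_ne_zero_of_mul hx
      exact Relation.TransGen.tail (ih i x h1) h2

/-- For an entrywise nonnegative real `m × m` matrix `S`, all traces of positive powers of
`S` vanish iff the support digraph of `S` is acyclic. -/
theorem trace_pow_eq_zero_iff_acyclic
    (m : ℕ) (S : Matrix (Fin m) (Fin m) ℝ)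
    (hS : ∀ i j, 0 ≤ S i j) :
    (∀ k : ℕ, 1 ≤ k → Matrix.trace (S ^ k) = 0) ↔
      ∀ i : Fin m, ¬ Relation.TransGen (fun a b => S a b ≠ 0) i i := by
  constructor
  · intro h i hcyc
    obtain ⟨k, hk, hpos⟩ := transGen_pos m S hS hcyc
    have htr := h k hk
    rw [Matrix.trace] at htr
    have := (Finset.sum_eq_zero_iff_of_nonneg
      (fun x _ => pow_entry_nonneg m S hS k x x)).mp htr i (Finset.mem_univ i)
    exact hpos.ne' this
  · intro h k hk
    rw [Matrix.trace]
    refine Finset.sum_eq_zero fun i _ => ?_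
    by_contra hne
    obtain ⟨k', rfl⟩ := Nat.exists_eq_add_of_le hk
    exact h i (pow_ne_zero_transGen m S (k') i i (by
      simpa [Matrix.diag, Nat.add_comm] using hne))
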